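/- Dual representation of the Average Value at Risk: let (X, ℬ, m) be a probability space, α ∈ (0,1), and φ : X → ℝ integrable. Then inf_{η ∈ ℝ} { η + (1/α) ∫ (φ − η)₊ dm } = sup { ∫ φ g dm : g measurable, 0 ≤ g ≤ 1/α, ∫ g dm = 1 }, and the supremum is attained. In particular, the Average Value at Risk equals the maximum of ∫ φ dμ over all probability measures μ absolutely continuous with respect to m whose density satisfies dμ/dm ≤ 1/α. -/

import Mathlib

open MeasureTheory Filter Topology

lemma avar_exists_quantile {X : Type*} [MeasurableSpace X] (m : Measure X)
    [IsProbabilityMeasure m] {α : ℝ} (hα0 : 0 < α) (hα1 : α < 1)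
    (φ : X → ℝ) (hφm : Measurable φ) :
    ∃ t : ℝ, m {x | t < φ x} ≤ ENNReal.ofReal α ∧ ENNReal.ofReal α ≤ m {x | t ≤ φ x} := by
  set α' := ENNReal.ofReal α with hα'
  have hα'pos : 0 < α' := ENNReal.ofReal_pos.mpr hα0
  have hα'lt1 : α' < 1 := by
    rw [hα', ← ENNReal.ofReal_one]
    exact (ENNReal.ofReal_lt_ofReal_iff one_pos).mpr hα1
  set S : Set ℝ := {s : ℝ | m {x | s < φ x} ≤ α'} with hS
  have hmono : ∀ ⦃s s' : ℝ⦄, s ≤ s' → m {x | s' < φ x} ≤ m {x | s < φ x} := by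
    intro s s' h
    exact measure_mono (fun x hx => lt_of_le_of_lt h hx)
  -- S is nonempty
  have hSne : S.Nonempty := by
    have h1 : (⋂ n : ℕ, {x | (n : ℝ) < φ x}) = ∅ := by
      ext x
      simp only [Set.mem_iInter, Set.mem_setOf_eq, Set.mem_empty_iff_false, iff_false, not_forall,
        not_lt]
      obtain ⟨n, hn⟩ := exists_nat_ge (φ x)
      exact ⟨n, hn⟩
    have h2 : Antitone (fun n : ℕ => {x | (n : ℝ) < φ x}) := by
      intro a b hab x hx
      simp only [Set.mem_setOf_eq] at hx ⊢
      exact lt_of_le_of_lt (by exact_mod_cast hab) hx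
    have h3 := h2.measure_iInter (μ := m)
      (fun n => (measurableSet_lt measurable_const hφm).nullMeasurableSet)
      ⟨0, measure_ne_top m _⟩
    rw [h1, measure_empty] at h3
    have h4 : (⨅ n : ℕ, m {x | (n : ℝ) < φ x}) < α' := by rw [← h3]; exact hα'pos
    obtain ⟨n, hn⟩ := iInf_lt_iff.mp h4
    exact ⟨n, hn.le⟩
  -- S is bounded below
  have hSbdd : BddBelow S := by
    have h1 : (⋃ n : ℕ, {x | (-(n : ℝ)) < φ x}) = Set.univ := by
      ext x
      simp only [Set.mem_iUnion, Set.mem_setOf_eq, Set.mem_univ, iff_true]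
      obtain ⟨n, hn⟩ := exists_nat_gt (-φ x)
      exact ⟨n, by linarith⟩
    have h2 : Monotone (fun n : ℕ => {x | (-(n : ℝ)) < φ x}) := by
      intro a b hab x hx
      simp only [Set.mem_setOf_eq] at hx ⊢
      refine lt_of_le_of_lt ?_ hx
      simp only [neg_le_neg_iff]
      exact_mod_cast hab
    have h3 := h2.measure_iUnion (μ := m)
    rw [h1, measure_univ] at h3
    have h4 : α' < ⨆ n : ℕ, m {x | (-(n : ℝ)) < φ x} := by rw [← h3]; exact hα'lt1
    obtain ⟨n, hn⟩ := lt_iSup_iff.mp h4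
    refine ⟨-(n : ℝ), fun s hs => ?_⟩
    by_contra hcon
    push_neg at hcon
    exact absurd (le_trans (hmono hcon.le) hs) (not_le.mpr hn)
  set t := sInf S with ht
  refine ⟨t, ?_, ?_⟩
  · -- m {t < φ} ≤ α'
    have h1 : {x | t < φ x} = ⋃ n : ℕ, {x | t + 1/(n+1) < φ x} := by
      ext x
      simp only [Set.mem_setOf_eq, Set.mem_iUnion]
      constructor
      · intro hx
        obtain ⟨n, hn⟩ := exists_nat_one_div_lt (sub_pos.mpr hx)
        exact ⟨n, by linarith⟩
      · rintro ⟨n, hn⟩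
        have : (0:ℝ) < 1/(n+1) := by positivity
        linarith
    have h2 : Monotone (fun n : ℕ => {x | t + 1/((n:ℝ)+1) < φ x}) := by
      intro a b hab x hx
      simp only [Set.mem_setOf_eq] at hx ⊢
      refine lt_of_le_of_lt ?_ hx
      have : (1:ℝ)/((b:ℝ)+1) ≤ 1/((a:ℝ)+1) := by
        apply one_div_le_one_div_of_le (by positivity)
        have : (a:ℝ) ≤ b := by exact_mod_cast hab
        linarith
      linarith
    rw [h1, h2.measure_iUnion]
    refine iSup_le fun n => ?_
    obtain ⟨s, hsS, hslt⟩ := Real.lt_sInf_add_pos hSne (show (0:ℝ) < 1/(n+1) by positivity)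
    exact le_trans (hmono (le_of_lt (by rw [← ht] at hslt; linarith))) hsS
  · -- α' ≤ m {t ≤ φ}
    have h1 : {x | t ≤ φ x} = ⋂ n : ℕ, {x | t - 1/((n:ℝ)+1) < φ x} := by
      ext x
      simp only [Set.mem_setOf_eq, Set.mem_iInter]
      constructor
      · intro hx n
        have : (0:ℝ) < 1/((n:ℝ)+1) := by positivity
        linarith
      · intro hx
        by_contra hcon
        push_neg at hcon
        obtain ⟨n, hn⟩ := exists_nat_one_div_lt (sub_pos.mpr hcon)
        have := hx n
        linarith
    have h2 : Antitone (fun n : ℕ => {x | t - 1/((n:ℝ)+1) < φ x}) := by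
      intro a b hab x hx
      simp only [Set.mem_setOf_eq] at hx ⊢
      refine lt_of_le_of_lt ?_ hx
      have : (1:ℝ)/((b:ℝ)+1) ≤ 1/((a:ℝ)+1) := by
        apply one_div_le_one_div_of_le (by positivity)
        have : (a:ℝ) ≤ b := by exact_mod_cast hab
        linarith
      linarith
    rw [h1, h2.measure_iInter
      (fun n => (measurableSet_lt measurable_const hφm).nullMeasurableSet)
      ⟨0, measure_ne_top m _⟩]
    refine le_iInf fun n => ?_
    have hnotin : t - 1/((n:ℝ)+1) ∉ S := by
      intro hcon
      have := csInf_le hSbdd hcon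
      rw [← ht] at this
      have hpos : (0:ℝ) < 1/((n:ℝ)+1) := by positivity
      linarith
    exact le_of_not_ge hnotin

/-- **Dual representation of the Average Value at Risk.**
For a probability space `(X, ℬ, m)`, `α ∈ (0,1)`, and integrable `φ`, the value
`inf_{η} { η + (1/α) ∫ (φ − η)₊ dm }` is the attained supremum of `∫ φ g dm` over
measurable densities `g` with `0 ≤ g ≤ 1/α` and `∫ g dm = 1`; i.e. it is the maximum of
`∫ φ dμ` over probability measures `μ ≪ m` with `dμ/dm ≤ 1/α`. -/
theorem avar_dual_representation
    {X : Type*} [MeasurableSpace X] (m : Measure X) [IsProbabilityMeasure m]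
    (α : ℝ) (hα0 : 0 < α) (hα1 : α < 1)
    (φ : X → ℝ) (hφm : Measurable φ) (hφ : Integrable φ m) :
    IsGreatest
      {r : ℝ | ∃ g : X → ℝ, Measurable g ∧ (∀ x, 0 ≤ g x ∧ g x ≤ 1 / α) ∧
        (∫ x, g x ∂m) = 1 ∧ r = ∫ x, φ x * g x ∂m}
      (⨅ η : ℝ, (η + (1 / α) * ∫ x, max (φ x - η) 0 ∂m)) := by
  set Sset : Set ℝ := {r : ℝ | ∃ g : X → ℝ, Measurable g ∧ (∀ x, 0 ≤ g x ∧ g x ≤ 1 / α) ∧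
    (∫ x, g x ∂m) = 1 ∧ r = ∫ x, φ x * g x ∂m} with hSset
  set F : ℝ → ℝ := fun η => η + (1 / α) * ∫ x, max (φ x - η) 0 ∂m with hF
  -- Upper bound direction: every element of Sset is at most F η, for each η.
  have hub : ∀ r ∈ Sset, ∀ η : ℝ, r ≤ F η := by
    rintro r ⟨g, hgm, hgb, hg1, rfl⟩ η
    have hgint : Integrable g m := by
      refine (integrable_const (1/α)).mono' hgm.aestronglyMeasurable (ae_of_all _ fun x => ?_)
      rw [Real.norm_eq_abs, abs_of_nonneg (hgb x).1]
      exact (hgb x).2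
    have hφgint : Integrable (fun x => φ x * g x) m := by
      have h := hφ.bdd_mul (c := 1/α) hgm.aestronglyMeasurable
        (ae_of_all _ fun x => by rw [Real.norm_eq_abs, abs_of_nonneg (hgb x).1]; exact (hgb x).2)
      simpa [mul_comm] using h
    have hmaxint : Integrable (fun x => max (φ x - η) 0) m :=
      (hφ.sub (integrable_const η)).pos_part
    have hrhsint : Integrable (fun x => (1/α) * max (φ x - η) 0 + η * g x) m :=
      (hmaxint.const_mul _).add (hgint.const_mul _)
    have hpt : ∀ x, φ x * g x ≤ (1/α) * max (φ x - η) 0 + η * g x := by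
      intro x
      obtain ⟨hg0, hgle⟩ := hgb x
      rcases le_or_gt η (φ x) with h | h
      · rw [max_eq_left (by linarith)]
        have h2 : (φ x - η) * g x ≤ (φ x - η) * (1/α) := by
          apply mul_le_mul_of_nonneg_left hgle (by linarith)
        nlinarith
      · rw [max_eq_right (by linarith)]
        nlinarith
    have hint := integral_mono hφgint hrhsint hpt
    rw [integral_add (hmaxint.const_mul _) (hgint.const_mul _), integral_const_mul,
      integral_const_mul, hg1, mul_one] at hint
    rw [hF]
    linarith
  -- Construction of the optimal density.
  obtain ⟨t, hple, hqge⟩ := avar_exists_quantile m hα0 hα1 φ hφm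
  set A := {x | t < φ x} with hA
  set E := {x | φ x = t} with hE
  have hAm : MeasurableSet A := measurableSet_lt measurable_const hφm
  have hEm : MeasurableSet E := hφm (measurableSet_singleton t)
  set pR := (m A).toReal with hpR
  set qR := (m E).toReal with hqR
  have hpRle : pR ≤ α := ENNReal.toReal_le_of_le_ofReal hα0.le hple
  have hq0 : 0 ≤ qR := ENNReal.toReal_nonneg
  have hsum : α ≤ pR + qR := by
    have hsplit : {x | t ≤ φ x} = A ∪ E := by
      ext x
      simp only [Set.mem_setOf_eq, Set.mem_union, hA, hE]
      constructor
      · intro hx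
        rcases lt_or_eq_of_le hx with h | h
        · exact Or.inl h
        · exact Or.inr h.symm
      · rintro (h | h)
        · exact h.le
        · exact h.ge
    have hdisj : Disjoint A E := by
      rw [Set.disjoint_left]
      intro x hxA hxE
      simp only [hA, Set.mem_setOf_eq] at hxA
      simp only [hE, Set.mem_setOf_eq] at hxE
      exact absurd hxA (by rw [hxE]; exact lt_irrefl t)
    have h1 : m {x | t ≤ φ x} = m A + m E := by
      rw [hsplit, measure_union hdisj hEm]
    rw [h1] at hqge
    have h2 := ENNReal.toReal_mono (a := ENNReal.ofReal α) (b := m A + m E)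
      (by finiteness) hqge
    rw [ENNReal.toReal_ofReal hα0.le, ENNReal.toReal_add (measure_ne_top m _)
      (measure_ne_top m _)] at h2
    exact h2
  -- choose the constant c on the set {φ = t}
  have hc : ∃ c : ℝ, 0 ≤ c ∧ c ≤ 1/α ∧ c * qR = (α - pR)/α := by
    rcases eq_or_lt_of_le hq0 with h | h
    · refine ⟨0, le_refl 0, by positivity, ?_⟩
      have : pR = α := le_antisymm hpRle (by linarith)
      rw [this, ← h]
      simp
    · refine ⟨(α - pR)/(α * qR), div_nonneg (by linarith) (by positivity), ?_, ?_⟩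
      · rw [div_le_div_iff₀ (by positivity) hα0]
        nlinarith
      · field_simp
  obtain ⟨c, hc0, hcle, hcq⟩ := hc
  set g : X → ℝ := fun x => A.indicator (fun _ => 1/α) x + E.indicator (fun _ => c) x with hg
  have hAE : ∀ x, x ∈ A → x ∉ E := by
    intro x hxA hxE
    simp only [hA, Set.mem_setOf_eq] at hxA
    simp only [hE, Set.mem_setOf_eq] at hxE
    exact absurd hxA (by rw [hxE]; exact lt_irrefl t)
  have hgm : Measurable g :=
    (measurable_const.indicator hAm).add (measurable_const.indicator hEm)
  have hgb : ∀ x, 0 ≤ g x ∧ g x ≤ 1/α := by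
    intro x
    by_cases hxA : x ∈ A
    · rw [hg]
      simp only [Set.indicator_of_mem hxA, Set.indicator_of_notMem (hAE x hxA), add_zero]
      exact ⟨by positivity, le_refl _⟩
    · by_cases hxE : x ∈ E
      · rw [hg]
        simp only [Set.indicator_of_notMem hxA, Set.indicator_of_mem hxE, zero_add]
        exact ⟨hc0, hcle⟩
      · rw [hg]
        simp only [Set.indicator_of_notMem hxA, Set.indicator_of_notMem hxE, add_zero]
        exact ⟨le_refl _, by positivity⟩
  have hint1 : Integrable (A.indicator fun _ => (1/α : ℝ)) m :=
    (integrable_const _).indicator hAm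
  have hint2 : Integrable (E.indicator fun _ => c) m :=
    (integrable_const _).indicator hEm
  have hg1 : (∫ x, g x ∂m) = 1 := by
    have h1 : (∫ x, g x ∂m) = ∫ x, A.indicator (fun _ => 1/α) x ∂m
        + ∫ x, E.indicator (fun _ => c) x ∂m := integral_add hint1 hint2
    rw [integral_indicator_const _ hAm, integral_indicator_const _ hEm] at h1
    rw [h1, smul_eq_mul, smul_eq_mul, measureReal_def, measureReal_def, ← hpR, ← hqR]
    have : qR * c = (α - pR)/α := by rw [mul_comm]; exact hcq
    rw [this]
    field_simp
    ring
  -- the value of ∫ φ g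
  have hφA : Integrable (A.indicator fun x => φ x * (1/α)) m :=
    (hφ.mul_const _).indicator hAm
  have hφE : Integrable (E.indicator fun _ => t * c) m :=
    (integrable_const _).indicator hEm
  have hφgrw : ∀ x, φ x * g x = A.indicator (fun x => φ x * (1/α)) x
      + E.indicator (fun _ => t * c) x := by
    intro x
    by_cases hxA : x ∈ A
    · rw [hg]
      simp only [Set.indicator_of_mem hxA, Set.indicator_of_notMem (hAE x hxA), add_zero]
    · by_cases hxE : x ∈ E
      · have hxt : φ x = t := hxE
        rw [hg]
        simp only [Set.indicator_of_notMem hxA, Set.indicator_of_mem hxE, zero_add, hxt]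
      · rw [hg]
        simp only [Set.indicator_of_notMem hxA, Set.indicator_of_notMem hxE, add_zero, mul_zero]
  set IA := ∫ x in A, φ x ∂m with hIA
  have hval : (∫ x, φ x * g x ∂m) = IA * (1/α) + t * ((α - pR)/α) := by
    have h1 : (∫ x, φ x * g x ∂m) = ∫ x, (A.indicator (fun x => φ x * (1/α)) x
        + E.indicator (fun _ => t * c) x) ∂m := by
      congr 1
      ext x
      exact hφgrw x
    rw [h1, integral_add hφA hφE, integral_indicator_const _ hEm, integral_indicator hAm,
      integral_mul_const, smul_eq_mul, measureReal_def, ← hqR, ← hIA]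
    have h2 : qR * (t * c) = t * ((α - pR)/α) := by
      rw [← hcq]; ring
    rw [h2]
  -- the value of F t
  have hmaxrw : ∀ x, max (φ x - t) 0 = A.indicator (fun x => φ x - t) x := by
    intro x
    by_cases hxA : x ∈ A
    · rw [Set.indicator_of_mem hxA]
      have : t < φ x := hxA
      exact max_eq_left (by linarith)
    · rw [Set.indicator_of_notMem hxA]
      have : ¬ t < φ x := hxA
      exact max_eq_right (by push_neg at this; linarith)
  have hFt : F t = IA * (1/α) + t * ((α - pR)/α) := by
    have h1 : (∫ x, max (φ x - t) 0 ∂m) = ∫ x in A, (φ x - t) ∂m := by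
      rw [← integral_indicator hAm]
      congr 1
      ext x
      exact hmaxrw x
    have h2 : (∫ x in A, (φ x - t) ∂m) = IA - pR * t := by
      rw [integral_sub hφ.integrableOn
        (integrableOn_const (measure_ne_top m A)), setIntegral_const,
        smul_eq_mul, ← hIA, measureReal_def, ← hpR]
    rw [hF]
    simp only [h1, h2]
    field_simp
    ring
  have hmem : (IA * (1/α) + t * ((α - pR)/α)) ∈ Sset := ⟨g, hgm, hgb, hg1, hval.symm⟩
  -- conclude
  have hle : ∀ η, (IA * (1/α) + t * ((α - pR)/α)) ≤ F η := fun η => hub _ hmem η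
  have hbdd : BddBelow (Set.range F) := by
    refine ⟨IA * (1/α) + t * ((α - pR)/α), ?_⟩
    rintro y ⟨η, rfl⟩
    exact hle η
  have h1 : (⨅ η : ℝ, F η) ≤ IA * (1/α) + t * ((α - pR)/α) := hFt ▸ ciInf_le hbdd t
  have h2 : IA * (1/α) + t * ((α - pR)/α) ≤ ⨅ η : ℝ, F η := le_ciInf hle
  have heq : (⨅ η : ℝ, F η) = IA * (1/α) + t * ((α - pR)/α) := le_antisymm h1 h2
  constructor
  · rw [show (⨅ η : ℝ, (η + (1 / α) * ∫ x, max (φ x - η) 0 ∂m)) = ⨅ η : ℝ, F η from rfl, heq]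
    exact hmem
  · intro r hr
    exact le_ciInf fun η => hub r hr η
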